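/- There exists a monotone XOS (hence subadditive) valuation on 3 items for which pure Nash equilibrium utilities are not unique: for v with v(∅)=0, v(S)=2 for 1 ≤ |S| ≤ 2, v(S)=3 for |S|=3, every price vector of the form (x, x, 1-x) with 0 ≤ x ≤ 1/2 (and the buyer purchasing all three items) is a pure Nash equilibrium of the pricing game. -/

import Mathlib

/-- Non-uniqueness of equilibrium utilities for an XOS valuation on
three items: for `v(∅)=0`, `v(S)=2` for `1 ≤ |S| ≤ 2`, `v(S)=3` for `|S|=3`,
every price vector `(x, x, 1-x)` with `0 ≤ x ≤ 1/2` is a pure Nash equilibrium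
in which the buyer (using a maximal demand-consistent decision map) purchases
all three items. -/
theorem stmt9 (v : Finset (Fin 3) → ℝ)
    (hv : ∀ S : Finset (Fin 3), v S = if S = ∅ then 0 else if S.card ≤ 2 then 2 else 3)
    (X : (Fin 3 → ℝ) → Finset (Fin 3))
    (hXd : ∀ q : Fin 3 → ℝ, (∀ i, 0 ≤ q i) → ∀ T : Finset (Fin 3),
      v T - ∑ i ∈ T, q i ≤ v (X q) - ∑ i ∈ X q, q i)
    (hXmax : ∀ q : Fin 3 → ℝ, (∀ i, 0 ≤ q i) → ∀ T : Finset (Fin 3),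
      (∀ U : Finset (Fin 3), v U - ∑ i ∈ U, q i ≤ v T - ∑ i ∈ T, q i) →
      ¬ X q ⊂ T)
    (x : ℝ) (hx0 : 0 ≤ x) (hx : x ≤ 1/2) :
    X ![x, x, 1-x] = Finset.univ ∧
    (∀ i : Fin 3, ∀ q : ℝ, 0 ≤ q →
      (if i ∈ X (Function.update ![x, x, 1-x] i q) then q else 0) ≤
      (if i ∈ X ![x, x, 1-x] then ![x, x, 1-x] i else 0)) := by
  set p : Fin 3 → ℝ := ![x, x, 1-x] with hp
  have hp0 : ∀ j, 0 ≤ p j := by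
    intro j; fin_cases j <;> simp [p] <;> linarith
  have hpx : ∀ j, x ≤ p j := by
    intro j; fin_cases j <;> simp [p] <;> linarith
  have hsum : ∑ j ∈ Finset.univ, p j = 1 + x := by
    simp [p, Fin.sum_univ_three]; ring
  have hvuniv : v (Finset.univ : Finset (Fin 3)) = 3 := by
    rw [hv]
    norm_num [Finset.card_univ]
    decide
  have hmax : ∀ U : Finset (Fin 3), v U - ∑ j ∈ U, p j ≤ 2 - x := by
    intro U
    rcases eq_or_ne U ∅ with h | h
    · subst h; simp [hv]; linarith
    · have hne : U.Nonempty := Finset.nonempty_iff_ne_empty.2 h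
      obtain ⟨j, hj⟩ := hne
      have hsx : x ≤ ∑ j ∈ U, p j :=
        le_trans (hpx j) (Finset.single_le_sum (fun k _ => hp0 k) hj)
      rw [hv, if_neg h]
      by_cases hc : U.card ≤ 2
      · rw [if_pos hc]; linarith
      · rw [if_neg hc]
        have hU : U = Finset.univ := Finset.eq_univ_of_card U (by
          have h3 : U.card ≤ 3 := by simpa using Finset.card_le_univ U
          simp; omega)
        subst hU
        rw [hsum]; linarith
  have hXp : X p = Finset.univ := by
    have h1 : ∀ U : Finset (Fin 3), v U - ∑ j ∈ U, p j ≤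
        v Finset.univ - ∑ j ∈ Finset.univ, p j := by
      intro U; rw [hvuniv, hsum]
      have := hmax U; linarith
    have h2 := hXmax p hp0 Finset.univ h1
    by_contra hne
    exact h2 (Finset.ssubset_iff_subset_ne.2 ⟨Finset.subset_univ _, hne⟩)
  refine ⟨hXp, ?_⟩
  intro i q hq
  set p' := Function.update p i q with hp'
  have hp'0 : ∀ j, 0 ≤ p' j := by
    intro j; rcases eq_or_ne j i with h | h
    · subst h; simp [p', hq]
    · simp [p', Function.update_of_ne h]; exact hp0 j
  rw [hXp]
  simp only [Finset.mem_univ, if_true]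
  by_cases hi : i ∈ X p'
  · rw [if_pos hi]
    obtain ⟨T, hiT, hT⟩ : ∃ T : Finset (Fin 3), i ∉ T ∧ v T - ∑ j ∈ T, p j = 2 - x := by
      fin_cases i
      · refine ⟨{1}, by decide, ?_⟩
        rw [hv]; norm_num [p]
      · refine ⟨{0}, by decide, ?_⟩
        rw [hv]; norm_num [p]
      · refine ⟨{0}, by decide, ?_⟩
        rw [hv]; norm_num [p]
    have hd := hXd p' hp'0 T
    have hT' : ∑ j ∈ T, p' j = ∑ j ∈ T, p j :=
      Finset.sum_congr rfl (fun j hj =>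
        Function.update_of_ne (by rintro rfl; exact hiT hj) _ _)
    have hS : ∑ j ∈ X p', p' j = ∑ j ∈ X p', p j - p i + q := by
      rw [hp', Finset.sum_update_of_mem hi,
        Finset.sum_sdiff_eq_sub (by simpa using hi), Finset.sum_singleton]
      ring
    have hSmax := hmax (X p')
    rw [hT', hT, hS] at hd
    linarith
  · rw [if_neg hi]; exact hp0 i
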